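/- If a connected graph G has blocks B_1, ..., B_r, then md(G) = \sum_{i=1}^r md(B_i). -/

import Mathlib

open SimpleGraph

/-- An edge-coloring `Γ` is a monochromatic disconnection coloring (MD-coloring) of `G`
if every pair of distinct vertices is separated by a monochromatic edge-cut. -/
def IsMDColoring {V : Type*} (G : SimpleGraph V) (Γ : Sym2 V → ℕ) : Prop :=
  ∀ u v : V, u ≠ v → ∃ (c : ℕ) (F : Set (Sym2 V)), F ⊆ G.edgeSet ∧
    (∀ e ∈ F, Γ e = c) ∧ ¬ (G.deleteEdges F).Reachable u v

/-- The monochromatic disconnection number of `G`: the maximum number of colors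
used by an MD-coloring of `G`. -/
noncomputable def md {V : Type*} (G : SimpleGraph V) : ℕ :=
  sSup {n : ℕ | ∃ Γ : Sym2 V → ℕ, IsMDColoring G Γ ∧ (Γ '' G.edgeSet).ncard = n}

/-- The block of `G` containing the edge `e`: the subgraph formed by `e` together with
all edges lying on a common cycle with . -/
def blockOf {V : Type*} (G : SimpleGraph V) (e : Sym2 V) : SimpleGraph V :=
  SimpleGraph.fromEdgeSet
    {f | f = e ∨ ∃ (v : V) (w : G.Walk v v), w.IsCycle ∧ e ∈ w.edges ∧ f ∈ w.edges}

namespace MDAux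

variable {V : Type*}

/-- Two edges lie on a common cycle. -/
def CycRel (G : SimpleGraph V) (e f : Sym2 V) : Prop :=
  ∃ (v : V) (w : G.Walk v v), w.IsCycle ∧ e ∈ w.edges ∧ f ∈ w.edges

lemma cycRel_symm {G : SimpleGraph V} {e f : Sym2 V} (h : CycRel G e f) : CycRel G f e := by
  obtain ⟨v, w, hc, he, hf⟩ := h; exact ⟨v, w, hc, hf, he⟩

lemma blockOf_eq_fromEdgeSet (G : SimpleGraph V) (e : Sym2 V) :
    blockOf G e = SimpleGraph.fromEdgeSet {f | f = e ∨ CycRel G e f} := rfl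

lemma mem_blockOf_iff {G : SimpleGraph V} {e f : Sym2 V} :
    f ∈ (blockOf G e).edgeSet ↔ (f = e ∨ CycRel G e f) ∧ ¬ f.IsDiag := by
  rw [blockOf_eq_fromEdgeSet, edgeSet_fromEdgeSet]
  exact Iff.rfl

lemma mem_edgeSet_of_cycRel {G : SimpleGraph V} {e f : Sym2 V} (h : CycRel G e f) :
    f ∈ G.edgeSet := by
  obtain ⟨v, w, _, _, hf⟩ := h
  exact w.edges_subset_edgeSet hf

lemma self_mem_blockOf {G : SimpleGraph V} {e : Sym2 V} (he : e ∈ G.edgeSet) :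
    e ∈ (blockOf G e).edgeSet :=
  mem_blockOf_iff.2 ⟨Or.inl rfl, G.not_isDiag_of_mem_edgeSet he⟩

lemma blockOf_edgeSet_subset {G : SimpleGraph V} {e : Sym2 V} (he : e ∈ G.edgeSet) :
    (blockOf G e).edgeSet ⊆ G.edgeSet := by
  intro f hf
  rcases mem_blockOf_iff.1 hf with ⟨hf1 | hf2, _⟩
  · exact hf1 ▸ he
  · exact mem_edgeSet_of_cycRel hf2

lemma blockOf_le {G : SimpleGraph V} {e : Sym2 V} (he : e ∈ G.edgeSet) :
    blockOf G e ≤ G := by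
  intro a b hab
  exact (G.mem_edgeSet).1 (blockOf_edgeSet_subset he ((blockOf G e).mem_edgeSet.2 hab))

lemma mem_support_of_mem_edges {G : SimpleGraph V} {a b : V} {p : G.Walk a b} {f : Sym2 V}
    (hf : f ∈ p.edges) {x : V} (hx : x ∈ f) : x ∈ p.support := by
  induction f using Sym2.ind with
  | _ c d =>
    rcases Sym2.mem_iff.1 hx with rfl | rfl
    · exact p.fst_mem_support_of_mem_edges hf
    · exact p.snd_mem_support_of_mem_edges hf

/-- In a path starting at `x`, any edge containing `x` is the first edge. -/
lemma first_edge_eq {G : SimpleGraph V} {x c : V} {p : G.Walk x c} (hp : p.IsPath)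
    {h : Sym2 V} (hh : h ∈ p.edges) (hx : x ∈ h) :
    ∃ (y : V) (hxy : G.Adj x y) (q : G.Walk y c), p = Walk.cons hxy q ∧ h = s(x, y) := by
  cases p with
  | nil => simp at hh
  | cons hadj q =>
    rename_i b
    rw [Walk.edges_cons, List.mem_cons] at hh
    rcases hh with rfl | hh
    · exact ⟨b, hadj, q, rfl, rfl⟩
    · exact absurd (mem_support_of_mem_edges hh hx)
        ((Walk.cons_isPath_iff _ _).1 hp).2

/-- Split a cycle at an edge `g`. -/
lemma cycle_split {G : SimpleGraph V} {b : V} {w : G.Walk b b} (hw : w.IsCycle) {g : Sym2 V}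
    (hg : g ∈ w.edges) :
    ∃ (x y : V) (hxy : G.Adj x y) (D : G.Walk y x), D.IsPath ∧ s(x, y) = g ∧ g ∉ D.edges ∧
      ∀ h ∈ w.edges, h = g ∨ h ∈ D.edges := by
  classical
  -- find a dart of `g`
  obtain ⟨d, hd, hde⟩ : ∃ d ∈ w.darts, d.edge = g := by
    rw [Walk.edges] at hg
    obtain ⟨d, hd, hde⟩ := List.mem_map.1 hg
    exact ⟨d, hd, hde⟩
  have hx : d.fst ∈ w.support := Walk.dart_fst_mem_support_of_mem_darts _ hd
  set x := d.fst with hxdef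
  have hxg : x ∈ g := by
    rw [← hde]; exact Sym2.mem_mk_left _ _
  -- rotate the cycle to start at `x`
  set w' : G.Walk x x := w.rotate x hx with hw'def
  have hw'c : w'.IsCycle := hw.rotate hx
  have hw'e : ∀ h, h ∈ w'.edges ↔ h ∈ w.edges := fun h => (w.rotate_edges x hx).mem_iff
  have hg' : g ∈ w'.edges := (hw'e g).2 hg
  obtain ⟨z, hxz, t, hw'⟩ := Walk.not_nil_iff.1 hw'c.not_nil
  have ht : t.IsPath ∧ s(x, z) ∉ t.edges := (Walk.cons_isCycle_iff t hxz).1 (hw' ▸ hw'c)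
  have hedges : w'.edges = s(x, z) :: t.edges := by rw [hw', Walk.edges_cons]
  by_cases hcase : g = s(x, z)
  · subst hcase
    refine ⟨x, z, hxz, t, ht.1, rfl, ht.2, ?_⟩
    intro h hh
    have : h ∈ s(x, z) :: t.edges := hedges ▸ (hw'e h).2 hh
    rcases List.mem_cons.1 this with rfl | h2
    · exact Or.inl rfl
    · exact Or.inr h2
  · have hgt : g ∈ t.edges := by
      have : g ∈ s(x, z) :: t.edges := hedges ▸ hg'
      rcases List.mem_cons.1 this with rfl | h2
      · exact absurd rfl hcase
      · exact h2
    have hgrev : g ∈ t.reverse.edges := by rw [Walk.edges_reverse, List.mem_reverse]; exact hgt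
    obtain ⟨y, hxy, q, hq, hgeq⟩ := first_edge_eq ht.1.reverse hgrev hxg
    -- `t = (cons hxy q).reverse`
    have htq : t = q.reverse.append (Walk.cons hxy.symm Walk.nil) := by
      have := congrArg Walk.reverse hq
      rwa [Walk.reverse_reverse, Walk.reverse_cons] at this
    have hqpath : q.IsPath ∧ x ∉ q.support := (Walk.cons_isPath_iff _ _).1 (hq ▸ ht.1.reverse)
    -- the path `D`
    refine ⟨x, y, hxy, (Walk.cons hxz q.reverse).reverse, ?_, hgeq.symm, ?_, ?_⟩
    · refine Walk.IsPath.reverse ((Walk.cons_isPath_iff _ _).2 ⟨hqpath.1.reverse, ?_⟩)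
      rw [Walk.support_reverse, List.mem_reverse]
      exact hqpath.2
    · rw [Walk.edges_reverse, List.mem_reverse, Walk.edges_cons, List.mem_cons]
      push_neg
      refine ⟨hcase, ?_⟩
      rw [Walk.edges_reverse, List.mem_reverse]
      have hnd : (s(x, y) :: q.edges).Nodup := by
        have h1 := ht.1.reverse.edges_nodup
        rwa [hq, Walk.edges_cons] at h1
      rw [hgeq]
      exact (List.nodup_cons.1 hnd).1
    · intro h hh
      have hDe : ∀ h' : Sym2 V,
          h' ∈ (Walk.cons hxz q.reverse).reverse.edges ↔ h' = s(x, z) ∨ h' ∈ q.edges := by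
        intro h'
        rw [Walk.edges_reverse, List.mem_reverse, Walk.edges_cons, List.mem_cons,
          Walk.edges_reverse, List.mem_reverse]
      have : h ∈ s(x, z) :: t.edges := hedges ▸ (hw'e h).2 hh
      rcases List.mem_cons.1 this with rfl | h2
      · exact Or.inr ((hDe _).2 (Or.inl rfl))
      · -- h ∈ t.edges; t.edges as a set is {s(x,y)} ∪ q.edges
        have : h ∈ t.reverse.edges := by rw [Walk.edges_reverse, List.mem_reverse]; exact h2
        rw [hq, Walk.edges_cons, List.mem_cons] at this
        rcases this with rfl | h3
        · exact Or.inl hgeq.symm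
        · exact Or.inr ((hDe _).2 (Or.inr h3))

/-- First vertex of a walk lying in a set `Q`, with decomposition. -/
lemma first_hit {G : SimpleGraph V} (Q : Set V) :
    ∀ {b v : V} (W : G.Walk b v), (∃ x ∈ W.support, x ∈ Q) →
    ∃ (c : V) (W₁ : G.Walk b c) (W₂ : G.Walk c v), c ∈ Q ∧ W = W₁.append W₂ ∧
      ∀ x ∈ W₁.support, x ≠ c → x ∉ Q := by
  intro b v W
  induction W with
  | nil =>
    rintro ⟨x, hx, hxQ⟩
    rw [Walk.support_nil, List.mem_singleton] at hx
    subst hx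
    exact ⟨_, Walk.nil, Walk.nil, hxQ, rfl, by
      intro y hy hne
      rw [Walk.support_nil, List.mem_singleton] at hy
      exact absurd hy hne⟩
  | cons hadj W' ih =>
    rename_i a b' v'
    intro hex
    by_cases ha : a ∈ Q
    · exact ⟨a, Walk.nil, Walk.cons hadj W', ha, rfl, by
        intro y hy hne
        rw [Walk.support_nil, List.mem_singleton] at hy
        exact absurd hy hne⟩
    · obtain ⟨x, hx, hxQ⟩ := hex
      rw [Walk.support_cons, List.mem_cons] at hx
      rcases hx with rfl | hx
      · exact absurd hxQ ha
      · obtain ⟨c, W₁, W₂, hc, hdec, hprop⟩ := ih ⟨x, hx, hxQ⟩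
        refine ⟨c, Walk.cons hadj W₁, W₂, hc, by rw [Walk.cons_append, hdec], ?_⟩
        intro y hy hne
        rw [Walk.support_cons, List.mem_cons] at hy
        rcases hy with rfl | hy
        · exact ha
        · exact hprop y hy hne

/-- If all non-`c` vertices of a walk avoid `Q`, then any edge of the walk has an endpoint
outside `Q` (given the endpoints of edges in `Q` would both have to be `c`). -/
lemma edge_endpoint_not_mem {G : SimpleGraph V} {a b c : V} {W : G.Walk a b} {Q : Set V}
    (hW : ∀ x ∈ W.support, x ≠ c → x ∉ Q) {f : Sym2 V} (hf : f ∈ W.edges)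
    (hall : ∀ x ∈ f, x ∈ Q) : False := by
  induction f using Sym2.ind with
  | _ p q =>
    have hp : p ∈ W.support := mem_support_of_mem_edges hf (Sym2.mem_mk_left _ _)
    have hq : q ∈ W.support := mem_support_of_mem_edges hf (Sym2.mem_mk_right _ _)
    have hpc : p = c := by
      by_contra hne; exact hW p hp hne (hall p (Sym2.mem_mk_left _ _))
    have hqc : q = c := by
      by_contra hne; exact hW q hq hne (hall q (Sym2.mem_mk_right _ _))
    subst hpc; subst hqc
    exact G.not_isDiag_of_mem_edgeSet (W.edges_subset_edgeSet hf) (by simp)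

lemma end_mem_support_tail {G : SimpleGraph V} {a b : V} (W : G.Walk a b) (hW : ¬ W.Nil) :
    b ∈ W.support.tail := by
  obtain ⟨u, h, q, rfl⟩ := Walk.not_nil_iff.1 hW
  rw [Walk.support_cons, List.tail_cons]
  exact q.end_mem_support

lemma exists_common_endpoint {G : SimpleGraph V} {a b c d : V} {p : G.Walk a b}
    {q : G.Walk c d} {f : Sym2 V} (hp : f ∈ p.edges) (hq : f ∈ q.edges) :
    ∃ z, z ∈ p.support ∧ z ∈ q.support := by
  induction f using Sym2.ind with
  | _ c₁ c₂ =>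
    exact ⟨c₁, mem_support_of_mem_edges hp (Sym2.mem_mk_left _ _),
      mem_support_of_mem_edges hq (Sym2.mem_mk_left _ _)⟩

lemma mem_support_rotate {G : SimpleGraph V} [DecidableEq V] {v u : V} (c : G.Walk v v) (h : u ∈ c.support)
    {x : V} : x ∈ (c.rotate u h).support ↔ x ∈ c.support := by
  unfold Walk.rotate
  rw [Walk.mem_support_append_iff]
  conv_rhs => rw [← Walk.take_spec c h, Walk.mem_support_append_iff]
  tauto

lemma edge_walk_not_nil {G : SimpleGraph V} {a b : V} {W : G.Walk a b} {f : Sym2 V}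
    (hf : f ∈ W.edges) : ¬ W.Nil := by
  rw [Walk.not_nil_iff_lt_length]
  have h1 : 0 < W.edges.length := List.length_pos_of_mem hf
  rwa [Walk.length_edges] at h1

/-- The key transitivity: two cycles sharing an edge can be merged. -/
lemma cyc_trans {G : SimpleGraph V} {e f g : Sym2 V}
    (hef : CycRel G e f) (hfg : CycRel G f g) : g = e ∨ CycRel G e g := by
  classical
  by_cases hge : g = e
  · exact Or.inl hge
  refine Or.inr ?_
  obtain ⟨a, w₁, hw₁c, he1, hf1⟩ := hef
  obtain ⟨b, w₂, hw₂c, hf2, hg2⟩ := hfg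
  by_cases hg1 : g ∈ w₁.edges
  · exact ⟨a, w₁, hw₁c, he1, hg1⟩
  have hfg' : f ≠ g := fun h => hg1 (h ▸ hf1)
  obtain ⟨x, y, hxy, D, hDp, hgxy, hgD, hcov⟩ := cycle_split hw₂c hg2
  have hfD : f ∈ D.edges := (hcov f hf2).resolve_left hfg'
  set Q : Set V := {z | z ∈ w₁.support} with hQdef
  have hfQ : ∀ z ∈ f, z ∈ Q := fun z hz => mem_support_of_mem_edges hf1 hz
  -- decompose D at the first hit of Q
  obtain ⟨z₀, hz₀D, hz₀Q⟩ : ∃ z ∈ D.support, z ∈ Q := by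
    obtain ⟨z, hz1, hz2⟩ := exists_common_endpoint hfD hf1
    exact ⟨z, hz1, hz2⟩
  obtain ⟨q, D₁, D₂, hqQ, hDdec, hD₁⟩ := first_hit Q D ⟨z₀, hz₀D, hz₀Q⟩
  obtain ⟨p, E₁, E₂, hpQ, hE, hE₁⟩ := first_hit Q D₂.reverse
    ⟨q, by rw [Walk.support_reverse, List.mem_reverse]; exact D₂.start_mem_support, hqQ⟩
  set D₃ := E₁.reverse with hD₃def
  have hD₂dec : D₂ = E₂.reverse.append D₃ := by
    have h0 := congrArg Walk.reverse hE
    rwa [Walk.reverse_reverse, Walk.reverse_append] at h0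
  -- paths
  have hD₁p : D₁.IsPath := Walk.IsPath.of_append_left (hDdec ▸ hDp)
  have hD₂p : D₂.IsPath := Walk.IsPath.of_append_right (hDdec ▸ hDp)
  have hE₁p : E₁.IsPath := Walk.IsPath.of_append_left (hE ▸ hD₂p.reverse)
  have hE₂p : E₂.IsPath := Walk.IsPath.of_append_right (hE ▸ hD₂p.reverse)
  have hD₃p : D₃.IsPath := hE₁p.reverse
  -- f is in E₂
  have hfD₁ : f ∉ D₁.edges := fun hmem => edge_endpoint_not_mem hD₁ hmem hfQ
  have hfE₁ : f ∉ E₁.edges := fun hmem => edge_endpoint_not_mem hE₁ hmem hfQ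
  have hfD₂ : f ∈ D₂.edges := by
    have h0 : f ∈ D₁.edges ++ D₂.edges := by rw [← Walk.edges_append, ← hDdec]; exact hfD
    exact (List.mem_append.1 h0).resolve_left hfD₁
  have hfE₂ : f ∈ E₂.edges := by
    have h0 : f ∈ E₁.edges ++ E₂.edges := by
      rw [← Walk.edges_append, ← hE, Walk.edges_reverse, List.mem_reverse]; exact hfD₂
    exact (List.mem_append.1 h0).resolve_left hfE₁
  have hE₂nn : ¬ E₂.Nil := edge_walk_not_nil hfE₂
  -- p ≠ q
  have hpq : p ≠ q := by
    rintro rfl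
    have hnd := hD₂p.reverse.support_nodup
    rw [hE, Walk.support_append] at hnd
    exact (List.disjoint_of_nodup_append hnd) E₁.end_mem_support (end_mem_support_tail E₂ hE₂nn)
  -- the arc of w₁ from q to p through e
  have hqw₁ : q ∈ w₁.support := hqQ
  set wq := w₁.rotate q hqw₁ with hwqdef
  have hwqc : wq.IsCycle := hw₁c.rotate hqw₁
  have hwqe : ∀ h, h ∈ wq.edges ↔ h ∈ w₁.edges := fun h => (w₁.rotate_edges q hqw₁).mem_iff
  have hwqsup : ∀ z, z ∈ wq.support ↔ z ∈ w₁.support := fun z => mem_support_rotate w₁ hqw₁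
  have hpwq : p ∈ wq.support := (hwqsup p).2 hpQ
  have hAB := wq.take_spec hpwq
  set A := wq.takeUntil p hpwq with hAdef
  set B := wq.dropUntil p hpwq with hBdef
  have hewq : e ∈ wq.edges := (hwqe e).2 he1
  have heAB : e ∈ A.edges ++ B.edges := by rw [← Walk.edges_append, hAB]; exact hewq
  have hAnn : ¬ A.Nil := Walk.not_nil_of_ne (fun h => hpq h.symm)
  have hBnn : ¬ B.Nil := Walk.not_nil_of_ne hpq
  have htail : (A.support.tail ++ B.support.tail).Nodup := by
    have h0 := hwqc.support_nodup
    rw [← hAB, Walk.support_append] at h0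
    conv at h0 => rw [A.support_eq_cons]
    rwa [List.cons_append, List.tail_cons] at h0
  have hAp : A.IsPath := by
    rw [Walk.isPath_def, A.support_eq_cons]
    refine List.Nodup.cons ?_ ((List.nodup_append.1 htail).1)
    intro hmem
    exact (List.disjoint_of_nodup_append htail) hmem (end_mem_support_tail B hBnn)
  have hBp : B.IsPath := by
    rw [Walk.isPath_def, B.support_eq_cons]
    refine List.Nodup.cons ?_ ((List.nodup_append.1 htail).2.1)
    intro hmem
    exact (List.disjoint_of_nodup_append htail) (end_mem_support_tail A hAnn) hmem
  obtain ⟨R, hRp, hRsup, hRedges, heR⟩ :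
      ∃ R : G.Walk q p, R.IsPath ∧ (∀ z ∈ R.support, z ∈ w₁.support) ∧
        (∀ h' ∈ R.edges, h' ∈ w₁.edges) ∧ e ∈ R.edges := by
    rcases List.mem_append.1 heAB with hA | hB
    · refine ⟨A, hAp, ?_, ?_, hA⟩
      · intro z hz
        exact (hwqsup z).1 (wq.support_takeUntil_subset hpwq hz)
      · intro h' hh'
        exact (hwqe h').1 (wq.edges_takeUntil_subset hpwq hh')
    · refine ⟨B.reverse, hBp.reverse, ?_, ?_, ?_⟩
      · intro z hz
        rw [Walk.support_reverse, List.mem_reverse] at hz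
        exact (hwqsup z).1 (wq.support_dropUntil_subset hpwq hz)
      · intro h' hh'
        rw [Walk.edges_reverse, List.mem_reverse] at hh'
        exact (hwqe h').1 (wq.edges_dropUntil_subset hpwq hh')
      · rw [Walk.edges_reverse, List.mem_reverse]; exact hB
  -- edge subset facts
  have hD₁sub : ∀ h' ∈ D₁.edges, h' ∈ D.edges := by
    intro h' hh'
    rw [hDdec, Walk.edges_append]
    exact List.mem_append_left _ hh'
  have hD₃subD₂ : ∀ h' ∈ D₃.edges, h' ∈ D₂.edges := by
    intro h' hh'
    rw [hD₂dec, Walk.edges_append]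
    exact List.mem_append_right _ hh'
  have hD₂sub : ∀ h' ∈ D₂.edges, h' ∈ D.edges := by
    intro h' hh'
    rw [hDdec, Walk.edges_append]
    exact List.mem_append_right _ hh'
  -- support decomposition of D
  have hDsupnodup : (D₁.support ++ D₂.support.tail).Nodup := by
    have h0 := hDp.support_nodup
    rwa [hDdec, Walk.support_append] at h0
  have hD₃tsub : ∀ z ∈ D₃.support.tail, z ∈ D₂.support.tail := by
    intro z hz
    have h0 : D₂.support.tail = E₂.reverse.support.tail ++ D₃.support.tail := by
      rw [hD₂dec, Walk.support_append]
      conv_lhs => rw [E₂.reverse.support_eq_cons]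
      rw [List.cons_append, List.tail_cons]
    rw [h0]
    exact List.mem_append_right _ hz
  -- D₃ vertices other than p are outside Q
  have hD₃Q : ∀ z ∈ D₃.support, z ≠ p → z ∉ Q := by
    intro z hz
    rw [hD₃def, Walk.support_reverse, List.mem_reverse] at hz
    exact hE₁ z hz
  -- assemble the new cycle
  set inner : G.Walk y x := D₁.append (R.append D₃) with hinnerdef
  have hinnersup : inner.support = D₁.support ++ (R.support.tail ++ D₃.support.tail) := by
    rw [hinnerdef, Walk.support_append, Walk.support_append]
    conv_lhs => rw [R.support_eq_cons]
    rw [List.cons_append, List.tail_cons]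
  have hqRt : q ∉ R.support.tail := by
    intro hmem
    have := hRp.support_nodup
    rw [R.support_eq_cons] at this
    exact (List.nodup_cons.1 this).1 hmem
  have hpD₃t : p ∉ D₃.support.tail := by
    intro hmem
    have := hD₃p.support_nodup
    rw [D₃.support_eq_cons] at this
    exact (List.nodup_cons.1 this).1 hmem
  have hinnerpath : inner.IsPath := by
    rw [Walk.isPath_def, hinnersup]
    refine List.Nodup.append hD₁p.support_nodup (List.Nodup.append ?_ ?_ ?_) ?_
    · have := hRp.support_nodup
      rw [R.support_eq_cons] at this
      exact (List.nodup_cons.1 this).2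
    · have := hD₃p.support_nodup
      rw [D₃.support_eq_cons] at this
      exact (List.nodup_cons.1 this).2
    · intro z hz1 hz2
      have hzQ : z ∈ Q := hRsup z (List.mem_of_mem_tail hz1)
      have hzne : z ≠ p := fun h => hpD₃t (h ▸ hz2)
      exact hD₃Q z (List.mem_of_mem_tail hz2) hzne hzQ
    · intro z hz1 hz2
      rcases List.mem_append.1 hz2 with hz2 | hz2
      · -- z in R tail: z ∈ Q, so z = q; but q ∉ R.support.tail
        have hzQ : z ∈ Q := hRsup z (List.mem_of_mem_tail hz2)
        have : z = q := by
          by_contra hne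
          exact hD₁ z hz1 hne hzQ
        exact hqRt (this ▸ hz2)
      · -- z in D₃ tail ⊆ D₂.support.tail, disjoint from D₁.support
        exact (List.disjoint_of_nodup_append hDsupnodup) hz1 (hD₃tsub z hz2)
  have hinneredges : inner.edges = D₁.edges ++ (R.edges ++ D₃.edges) := by
    rw [hinnerdef, Walk.edges_append, Walk.edges_append]
  have hginner : s(x, y) ∉ inner.edges := by
    rw [hinneredges, hgxy]
    intro hmem
    rcases List.mem_append.1 hmem with h0 | h0
    · exact hgD (hD₁sub g h0)
    · rcases List.mem_append.1 h0 with h0 | h0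
      · exact hg1 (hRedges g h0)
      · exact hgD (hD₂sub g (hD₃subD₂ g h0))
  refine ⟨x, Walk.cons hxy inner, (Walk.cons_isCycle_iff inner hxy).2 ⟨hinnerpath, hginner⟩,
    ?_, ?_⟩
  · rw [Walk.edges_cons, List.mem_cons]
    right
    rw [hinneredges]
    exact List.mem_append_right _ (List.mem_append_left _ heR)
  · rw [Walk.edges_cons, List.mem_cons]
    exact Or.inl hgxy.symm

lemma blockOf_eq_of_mem {G : SimpleGraph V} {e f : Sym2 V} (he : e ∈ G.edgeSet)
    (hf : f ∈ (blockOf G e).edgeSet) : blockOf G f = blockOf G e := by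
  rcases mem_blockOf_iff.1 hf with ⟨rfl | hef, _⟩
  · rfl
  · rw [blockOf_eq_fromEdgeSet, blockOf_eq_fromEdgeSet]
    congr 1
    ext h
    simp only [Set.mem_setOf_eq]
    constructor
    · rintro (rfl | hfh)
      · exact Or.inr hef
      · exact cyc_trans hef hfh
    · rintro (rfl | heh)
      · exact Or.inr (cycRel_symm hef)
      · exact cyc_trans (cycRel_symm hef) heh

lemma support_subset_support {H : SimpleGraph V} :
    ∀ {a b : V} (W : H.Walk a b), ¬ W.Nil → ∀ x ∈ W.support, x ∈ H.support := by
  intro a b W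
  induction W with
  | nil => intro h; simp at h
  | cons hadj q ih =>
    intro _ x hx
    rw [Walk.support_cons, List.mem_cons] at hx
    rcases hx with rfl | hx
    · exact ⟨_, hadj⟩
    · by_cases hq : q.Nil
      · rw [Walk.nil_iff_support_eq.1 hq, List.mem_singleton] at hx
        subst hx
        exact ⟨_, hadj.symm⟩
      · exact ih hq x hx

lemma blockOf_reachable_aux {G : SimpleGraph V} {e : Sym2 V} (he : e ∈ G.edgeSet) :
    ∀ u, u ∈ (blockOf G e).support → ∀ x, x ∈ e → (blockOf G e).Reachable u x := by
  classical
  intro u hu x hx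
  obtain ⟨u', huu'⟩ := hu
  have hedge : s(u, u') ∈ (blockOf G e).edgeSet := (blockOf G e).mem_edgeSet.2 huu'
  rcases mem_blockOf_iff.1 hedge with ⟨heq | hcyc, _⟩
  · rw [← heq] at hx
    rcases Sym2.mem_iff.1 hx with rfl | rfl
    · exact Reachable.refl _
    · exact huu'.reachable
  · obtain ⟨t, w, hwc, hew, huw⟩ := hcyc
    have hsub : ∀ h' ∈ w.edges, h' ∈ (blockOf G e).edgeSet := by
      intro h' hh'
      exact mem_blockOf_iff.2 ⟨Or.inr ⟨t, w, hwc, hew, hh'⟩,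
        G.not_isDiag_of_mem_edgeSet (w.edges_subset_edgeSet hh')⟩
    set wH := w.transfer (blockOf G e) hsub with hwHdef
    have hsup : wH.support = w.support := Walk.support_transfer _ _
    have hu_mem : u ∈ wH.support := by
      rw [hsup]; exact mem_support_of_mem_edges huw (Sym2.mem_mk_left _ _)
    have hx_mem : x ∈ wH.support := by
      rw [hsup]; exact mem_support_of_mem_edges hew hx
    have r1 : (blockOf G e).Reachable t u := ⟨wH.takeUntil u hu_mem⟩
    have r2 : (blockOf G e).Reachable t x := ⟨wH.takeUntil x hx_mem⟩
    exact r1.symm.trans r2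

lemma blockOf_reachable {G : SimpleGraph V} {e : Sym2 V} (he : e ∈ G.edgeSet) {u v : V}
    (hu : u ∈ (blockOf G e).support) (hv : v ∈ (blockOf G e).support) :
    (blockOf G e).Reachable u v := by
  have hx : ∃ x, x ∈ e := by
    induction e using Sym2.ind with
    | _ a₀ b₀ => exact ⟨a₀, Sym2.mem_mk_left _ _⟩
  obtain ⟨x, hxe⟩ := hx
  exact (blockOf_reachable_aux he u hu x hxe).trans (blockOf_reachable_aux he v hv x hxe).symm

/-- Paths between vertices of a block stay inside the block. -/
lemma path_edges_in_blockOf {G : SimpleGraph V} {e : Sym2 V} (he : e ∈ G.edgeSet) :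
    ∀ {u v : V} (p : G.Walk u v), p.IsPath → u ∈ (blockOf G e).support →
      v ∈ (blockOf G e).support → ∀ f ∈ p.edges, f ∈ (blockOf G e).edgeSet := by
  classical
  intro u v p
  induction p with
  | nil => intro _ _ _ f hf; simp at hf
  | cons hadj p' ih =>
    rename_i u b v
    intro hp hu hv f hf
    have hp' : p'.IsPath := hp.of_cons
    have hunotin : u ∉ p'.support := ((Walk.cons_isPath_iff _ _).1 hp).2
    have hkey : s(u, b) ∈ (blockOf G e).edgeSet := by
      by_contra hK
      obtain ⟨c, P₁, P₂, hc, hdec, hP₁⟩ := first_hit {z | z ∈ (blockOf G e).support} p'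
        ⟨v, p'.end_mem_support, hv⟩
      have hP₁sub : ∀ z ∈ P₁.support, z ∈ p'.support := by
        intro z hz
        rw [hdec]
        exact (Walk.mem_support_append_iff _ _).2 (Or.inl hz)
      have hcu : c ≠ u := fun h => hunotin (h ▸ hP₁sub c P₁.end_mem_support)
      have hreach : (blockOf G e).Reachable c u := blockOf_reachable he hc hu
      obtain ⟨Q0⟩ := hreach
      set Qp : (blockOf G e).Walk c u := Q0.toPath.1 with hQpdef
      have hQpath : Qp.IsPath := Q0.toPath.2
      have hQnn : ¬ Qp.Nil := Walk.not_nil_of_ne hcu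
      have hQsupp : ∀ z ∈ Qp.support, z ∈ (blockOf G e).support :=
        support_subset_support Qp hQnn
      have hQG : ∀ h' ∈ Qp.edges, h' ∈ G.edgeSet := fun h' hh' =>
        blockOf_edgeSet_subset he (Qp.edges_subset_edgeSet hh')
      set Qg : G.Walk c u := Qp.transfer G hQG with hQgdef
      have hQgpath : Qg.IsPath := Walk.IsPath.transfer _ hQpath
      have hQgsup : Qg.support = Qp.support := Walk.support_transfer _ _
      have hQgedges : Qg.edges = Qp.edges := Walk.edges_transfer _ _
      have hQgH : ∀ h' ∈ Qg.edges, h' ∈ (blockOf G e).edgeSet := by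
        intro h' hh'
        rw [hQgedges] at hh'
        exact Qp.edges_subset_edgeSet hh'
      -- the appended path
      have hP₁p : P₁.IsPath := Walk.IsPath.of_append_left (hdec ▸ hp')
      have happpath : (P₁.append Qg).IsPath := by
        rw [Walk.isPath_def, Walk.support_append]
        refine List.Nodup.append hP₁p.support_nodup ?_ ?_
        · have := hQgpath.support_nodup
          rw [Qg.support_eq_cons] at this
          exact (List.nodup_cons.1 this).2
        · intro z hz1 hz2
          have hzH : z ∈ (blockOf G e).support := by
            apply hQsupp
            rw [← hQgsup]
            exact List.mem_of_mem_tail hz2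
          have hzc : z = c := by
            by_contra hne
            exact hP₁ z hz1 hne hzH
          subst hzc
          have := hQgpath.support_nodup
          rw [Qg.support_eq_cons] at this
          exact (List.nodup_cons.1 this).1 hz2
      have hedgenotin : s(u, b) ∉ (P₁.append Qg).edges := by
        rw [Walk.edges_append]
        intro hmem
        rcases List.mem_append.1 hmem with h0 | h0
        · exact hunotin (hP₁sub u (mem_support_of_mem_edges h0 (Sym2.mem_mk_left _ _)))
        · exact hK (hQgH _ h0)
      set C : G.Walk u u := Walk.cons hadj (P₁.append Qg) with hCdef
      have hC : C.IsCycle := (Walk.cons_isCycle_iff _ hadj).2 ⟨happpath, hedgenotin⟩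
      -- a block edge on the cycle
      have hQgnn : ¬ Qg.Nil := Walk.not_nil_of_ne hcu
      obtain ⟨w₂, hcw₂, q₂, hQdec⟩ := Walk.not_nil_iff.1 hQgnn
      have hfH : s(c, w₂) ∈ (blockOf G e).edgeSet := by
        apply hQgH
        rw [hQdec, Walk.edges_cons]
        exact List.mem_cons_self
      have hfHC : s(c, w₂) ∈ C.edges := by
        rw [hCdef, Walk.edges_cons, Walk.edges_append, hQdec, Walk.edges_cons]
        right
        exact List.mem_append_right _ List.mem_cons_self
      have hubC : s(u, b) ∈ C.edges := by
        rw [hCdef, Walk.edges_cons]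
        exact List.mem_cons_self
      have hcyc : CycRel G s(c, w₂) s(u, b) := ⟨u, C, hC, hfHC, hubC⟩
      have : s(u, b) ∈ (blockOf G s(c, w₂)).edgeSet :=
        mem_blockOf_iff.2 ⟨Or.inr hcyc,
          G.not_isDiag_of_mem_edgeSet (G.mem_edgeSet.2 hadj)⟩
      rw [blockOf_eq_of_mem he hfH] at this
      exact hK this
    have hbsupp : b ∈ (blockOf G e).support :=
      ⟨u, ((blockOf G e).mem_edgeSet.1 hkey).symm⟩
    rw [Walk.edges_cons, List.mem_cons] at hf
    rcases hf with rfl | hf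
    · exact hkey
    · exact ih hp' hbsupp hv f hf

/-- A monochromatic cut inside a block separates the same vertices in `G`. -/
lemma not_reachable_of_block_cut {G : SimpleGraph V} {e : Sym2 V} (he : e ∈ G.edgeSet)
    {F : Set (Sym2 V)} (hF : F ⊆ (blockOf G e).edgeSet) {u v : V}
    (hu : u ∈ (blockOf G e).support) (hv : v ∈ (blockOf G e).support)
    (h : ¬ ((blockOf G e).deleteEdges F).Reachable u v) :
    ¬ (G.deleteEdges F).Reachable u v := by
  classical
  intro hre
  obtain ⟨w0⟩ := hre
  have hsub1 : ∀ h' ∈ w0.edges, h' ∈ G.edgeSet := by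
    intro h' hh'
    have h1 := w0.edges_subset_edgeSet hh'
    rw [edgeSet_deleteEdges] at h1
    exact h1.1
  set wG : G.Walk u v := w0.transfer G hsub1 with hwGdef
  set p : G.Walk u v := wG.toPath.1 with hpdef
  have hppath : p.IsPath := wG.toPath.2
  have hpe : ∀ h' ∈ p.edges, h' ∈ w0.edges := by
    intro h' hh'
    have h1 : h' ∈ wG.edges := Walk.edges_toPath_subset wG hh'
    rwa [hwGdef, Walk.edges_transfer] at h1
  have hpH : ∀ h' ∈ p.edges, h' ∈ (blockOf G e).edgeSet :=
    path_edges_in_blockOf he p hppath hu hv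
  have hpF : ∀ h' ∈ p.edges, h' ∉ F := by
    intro h' hh' hmem
    have h1 := w0.edges_subset_edgeSet (hpe h' hh')
    rw [edgeSet_deleteEdges] at h1
    exact h1.2 hmem
  have hsub2 : ∀ h' ∈ p.edges, h' ∈ ((blockOf G e).deleteEdges F).edgeSet := by
    intro h' hh'
    rw [edgeSet_deleteEdges]
    exact ⟨hpH h' hh', hpF h' hh'⟩
  exact h ⟨p.transfer _ hsub2⟩

lemma mem_support_of_mem_edgeSet {H : SimpleGraph V} {h : Sym2 V} (hh : h ∈ H.edgeSet) :
    ∀ z ∈ h, z ∈ H.support := by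
  induction h using Sym2.ind with
  | _ a b =>
    intro z hz
    rcases Sym2.mem_iff.1 hz with rfl | rfl
    · exact ⟨b, H.mem_edgeSet.1 hh⟩
    · exact ⟨a, (H.mem_edgeSet.1 hh).symm⟩

lemma ncard_biUnion_le {α β : Type*} (S : Finset α) (f : α → Set β) :
    (⋃ a ∈ S, f a).ncard ≤ ∑ a ∈ S, (f a).ncard := by
  classical
  induction S using Finset.induction with
  | empty => simp
  | insert a s ha ih =>
    rw [Finset.set_biUnion_insert, Finset.sum_insert ha]
    exact le_trans (Set.ncard_union_le _ _) (Nat.add_le_add_left ih _)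

lemma ncard_biUnion_eq {α β : Type*} (S : Finset α) (f : α → Set β)
    (hfin : ∀ a ∈ S, (f a).Finite)
    (hdisj : ∀ a ∈ S, ∀ b ∈ S, a ≠ b → Disjoint (f a) (f b)) :
    (⋃ a ∈ S, f a).ncard = ∑ a ∈ S, (f a).ncard := by
  classical
  induction S using Finset.induction with
  | empty => simp
  | insert a s ha ih =>
    have hfa : (f a).Finite := hfin a (Finset.mem_insert_self _ _)
    have hrest : (⋃ x ∈ s, f x).Finite := by
      rw [← Finset.set_biUnion_coe]
      exact Set.Finite.biUnion s.finite_toSet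
        (fun i hi => hfin i (Finset.mem_insert_of_mem (by simpa using hi)))
    have hdis : Disjoint (f a) (⋃ x ∈ s, f x) := by
      rw [Set.disjoint_left]
      intro x hxa hxU
      rw [Set.mem_iUnion₂] at hxU
      obtain ⟨b, hb, hxb⟩ := hxU
      have hab : a ≠ b := fun h => ha (h ▸ hb)
      exact Set.disjoint_left.1
        (hdisj a (Finset.mem_insert_self _ _) b (Finset.mem_insert_of_mem hb) hab) hxa hxb
    rw [Finset.set_biUnion_insert, Finset.sum_insert ha,
      Set.ncard_union_eq hdis hfa hrest,
      ih (fun x hx => hfin x (Finset.mem_insert_of_mem hx))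
        (fun x hx y hy hxy => hdisj x (Finset.mem_insert_of_mem hx)
          y (Finset.mem_insert_of_mem hy) hxy)]

lemma isMDColoring_const (G : SimpleGraph V) : IsMDColoring G (fun _ => 0) := by
  intro u v huv
  refine ⟨0, G.edgeSet, subset_rfl, fun _ _ => rfl, ?_⟩
  rintro ⟨w⟩
  have : ∀ a b, ¬ (G.deleteEdges G.edgeSet).Adj a b := by
    intro a b hab
    rw [deleteEdges_adj] at hab
    exact hab.2 ((G.mem_edgeSet).2 hab.1)
  cases w with
  | nil => exact huv rfl
  | cons h q => exact this _ _ h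

section Fin
variable [Fintype V]

lemma mdSet_nonempty (G : SimpleGraph V) :
    {n : ℕ | ∃ Γ : Sym2 V → ℕ, IsMDColoring G Γ ∧ (Γ '' G.edgeSet).ncard = n}.Nonempty :=
  ⟨_, (fun _ => 0), isMDColoring_const G, rfl⟩

lemma mdSet_bddAbove (G : SimpleGraph V) :
    BddAbove {n : ℕ | ∃ Γ : Sym2 V → ℕ, IsMDColoring G Γ ∧ (Γ '' G.edgeSet).ncard = n} := by
  refine ⟨(G.edgeSet).ncard, ?_⟩
  rintro n ⟨Γ, _, rfl⟩
  exact Set.ncard_image_le (Set.toFinite _)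

lemma le_md {G : SimpleGraph V} {Γ : Sym2 V → ℕ} (h : IsMDColoring G Γ) :
    (Γ '' G.edgeSet).ncard ≤ md G :=
  le_csSup (mdSet_bddAbove G) ⟨Γ, h, rfl⟩

lemma md_le {G : SimpleGraph V} {m : ℕ}
    (h : ∀ n, (∃ Γ : Sym2 V → ℕ, IsMDColoring G Γ ∧ (Γ '' G.edgeSet).ncard = n) → n ≤ m) :
    md G ≤ m :=
  csSup_le (mdSet_nonempty G) h

lemma exists_md_coloring (G : SimpleGraph V) :
    ∃ Γ : Sym2 V → ℕ, IsMDColoring G Γ ∧ (Γ '' G.edgeSet).ncard = md G :=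
  Nat.sSup_mem (mdSet_nonempty G) (mdSet_bddAbove G)

end Fin

end MDAux

open MDAux
theorem stmt_2 {V : Type*} [Fintype V] (G : SimpleGraph V) (hG : G.Connected)
    (S : Finset (SimpleGraph V))
    (hS : ∀ H, H ∈ S ↔ ∃ e ∈ G.edgeSet, H = blockOf G e) :
    md G = ∑ H ∈ S, md H := by
  classical
  have hble : ∀ H ∈ S, H ≤ G := by
    intro H hH
    obtain ⟨e, he, rfl⟩ := (hS H).1 hH
    exact blockOf_le he
  have hcover : G.edgeSet = ⋃ H ∈ S, H.edgeSet := by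
    ext f
    simp only [Set.mem_iUnion, exists_prop]
    constructor
    · intro hf
      exact ⟨blockOf G f, (hS _).2 ⟨f, hf, rfl⟩, self_mem_blockOf hf⟩
    · rintro ⟨H, hH, hfH⟩
      exact edgeSet_subset_edgeSet.2 (hble H hH) hfH
  have hblockeq : ∀ H ∈ S, ∀ f ∈ H.edgeSet, blockOf G f = H := by
    intro H hH f hf
    obtain ⟨e, he, rfl⟩ := (hS H).1 hH
    exact blockOf_eq_of_mem he hf
  refine le_antisymm ?_ ?_
  · -- md G ≤ ∑
    apply md_le
    rintro n ⟨Γ, hΓ, rfl⟩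
    have hres : ∀ H ∈ S, IsMDColoring H Γ := by
      intro H hH u v huv
      obtain ⟨c, F, hFG, hmono, hdisc⟩ := hΓ u v huv
      obtain ⟨e, he, rfl⟩ := (hS H).1 hH
      refine ⟨c, F ∩ (blockOf G e).edgeSet, Set.inter_subset_right,
        fun f hf => hmono f hf.1, ?_⟩
      intro hre
      obtain ⟨w0⟩ := hre
      apply hdisc
      have hsub : ∀ h' ∈ w0.edges, h' ∈ (G.deleteEdges F).edgeSet := by
        intro h' hh'
        have h1 := w0.edges_subset_edgeSet hh'
        rw [edgeSet_deleteEdges] at h1 ⊢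
        refine ⟨blockOf_edgeSet_subset he h1.1, ?_⟩
        intro hmem
        exact h1.2 ⟨hmem, h1.1⟩
      exact ⟨w0.transfer _ hsub⟩
    calc (Γ '' G.edgeSet).ncard = (⋃ H ∈ S, Γ '' H.edgeSet).ncard := by
          rw [hcover, Set.image_iUnion₂]
      _ ≤ ∑ H ∈ S, (Γ '' H.edgeSet).ncard := ncard_biUnion_le S _
      _ ≤ ∑ H ∈ S, md H := Finset.sum_le_sum fun H hH => le_md (hres H hH)
  · -- ∑ ≤ md G
    choose Γopt hΓmd hΓcard using fun H : SimpleGraph V => exists_md_coloring H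
    have hfin : Finite (SimpleGraph V) := by
      refine Finite.of_injective (fun G : SimpleGraph V => G.Adj) ?_
      intro G₁ G₂ h
      exact SimpleGraph.ext h
    have : Fintype (SimpleGraph V) := Fintype.ofFinite _
    set idx : SimpleGraph V → ℕ := fun H => (Fintype.equivFin (SimpleGraph V) H : ℕ)
      with hidxdef
    have hidxinj : Function.Injective idx := by
      intro H₁ H₂ h
      exact (Fintype.equivFin (SimpleGraph V)).injective (Fin.val_injective h)
    set Γstar : Sym2 V → ℕ := fun f =>
      if hf : f ∈ G.edgeSet then Nat.pair (idx (blockOf G f)) (Γopt (blockOf G f) f) else 0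
      with hΓstardef
    have hstar : ∀ H ∈ S, ∀ f ∈ H.edgeSet, Γstar f = Nat.pair (idx H) (Γopt H f) := by
      intro H hH f hf
      have hfG : f ∈ G.edgeSet := edgeSet_subset_edgeSet.2 (hble H hH) hf
      rw [hΓstardef]
      simp only [dif_pos hfG, hblockeq H hH f hf]
    have hMD : IsMDColoring G Γstar := by
      intro u v huv
      obtain ⟨w0⟩ := hG.preconnected u v
      set p : G.Walk u v := w0.toPath.1 with hpdef
      have hppath : p.IsPath := w0.toPath.2
      have hpnn : ¬ p.Nil := Walk.not_nil_of_ne huv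
      obtain ⟨b, hadj, p', hpdec⟩ := Walk.not_nil_iff.1 hpnn
      have hup' : u ∉ p'.support := ((Walk.cons_isPath_iff _ _).1 (hpdec ▸ hppath)).2
      have he₁ : s(u, b) ∈ G.edgeSet := G.mem_edgeSet.2 hadj
      have hHS : blockOf G s(u, b) ∈ S := (hS _).2 ⟨_, he₁, rfl⟩
      have hubH : s(u, b) ∈ (blockOf G s(u, b)).edgeSet := self_mem_blockOf he₁
      have huH : u ∈ (blockOf G s(u, b)).support :=
        mem_support_of_mem_edgeSet hubH u (Sym2.mem_mk_left _ _)
      have hbH : b ∈ (blockOf G s(u, b)).support :=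
        mem_support_of_mem_edgeSet hubH b (Sym2.mem_mk_right _ _)
      obtain ⟨c, W₁, W₂, hcH, hWdec, hW₁⟩ :=
        first_hit {z | z ∈ (blockOf G s(u, b)).support} p'.reverse
          ⟨b, by rw [Walk.support_reverse, List.mem_reverse]; exact p'.start_mem_support, hbH⟩
      have hcu : c ≠ u := by
        intro h
        subst h
        apply hup'
        have h1 : c ∈ p'.reverse.support := by
          rw [hWdec]
          exact (Walk.mem_support_append_iff _ _).2 (Or.inl W₁.end_mem_support)
        rwa [Walk.support_reverse, List.mem_reverse] at h1
      obtain ⟨col, F, hFH, hFmono, hFdisc⟩ := hΓmd (blockOf G s(u, b)) u c hcu.symm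
      refine ⟨Nat.pair (idx (blockOf G s(u, b))) col, F, ?_, ?_, ?_⟩
      · exact fun f hf => edgeSet_subset_edgeSet.2 (hble _ hHS) (hFH hf)
      · intro f hf
        rw [hstar _ hHS f (hFH hf), hFmono f hf]
      · have hnot : ¬ (G.deleteEdges F).Reachable u c :=
          not_reachable_of_block_cut he₁ hFH huH hcH hFdisc
        intro hre
        apply hnot
        have hW₁edges : ∀ h' ∈ W₁.edges, h' ∈ (G.deleteEdges F).edgeSet := by
          intro h' hh'
          rw [edgeSet_deleteEdges]
          refine ⟨W₁.edges_subset_edgeSet hh', ?_⟩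
          intro hmem
          exact edge_endpoint_not_mem hW₁ hh'
            (fun z hz => mem_support_of_mem_edgeSet (hFH hmem) z hz)
        exact hre.trans ⟨W₁.transfer _ hW₁edges⟩
    have himg : Γstar '' G.edgeSet =
        ⋃ H ∈ S, (fun n => Nat.pair (idx H) n) '' (Γopt H '' H.edgeSet) := by
      rw [hcover, Set.image_iUnion₂]
      refine Set.iUnion₂_congr ?_
      intro H hH
      rw [Set.image_image]
      exact Set.image_congr (fun f hf => hstar H hH f hf)
    have hcount : (Γstar '' G.edgeSet).ncard = ∑ H ∈ S, md H := by
      rw [himg, ncard_biUnion_eq S _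
        (fun H _ => ((Set.toFinite H.edgeSet).image _).image _) ?_]
      · refine Finset.sum_congr rfl ?_
        intro H hH
        rw [Set.ncard_image_of_injective _ (fun a b h => (Nat.pair_eq_pair.1 h).2),
          hΓcard H]
      · intro H₁ h₁ H₂ h₂ hne
        rw [Set.disjoint_left]
        rintro x ⟨n₁, _, rfl⟩ ⟨n₂, _, hx⟩
        exact hne (hidxinj (Nat.pair_eq_pair.1 hx).1.symm)
    calc ∑ H ∈ S, md H = (Γstar '' G.edgeSet).ncard := hcount.symm
      _ ≤ md G := le_md hMD
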